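/- For every integer k ≥ 0, the set of solutions v ∈ Ṽ of ρ_k(v) = k + 4 is exactly {(1^{k+4}), (2^{k+3}), (3^{k+2}, 1), (5^{k+1}, 2, 1)}. -/

import Mathlib

/-- The recurrent sequence `u₀ = 0`, `u₁ = 1`, `u_{n+2} = (k+2)·u_{n+1} − u_n`. -/
noncomputable def useq (k : ℕ) : ℕ → ℝ
  | 0 => 0
  | 1 => 1
  | n + 2 => ((k : ℝ) + 2) * useq k (n + 1) - useq k n

/-- `ρ_k(0) = 0` and `ρ_k(n) = 1 + u_{n−1}/(u_n + 1)` for `n ≥ 1`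
(for `k = 0` this is `ρ(n) = 1 + (n−1)/(n+1)`). -/
noncomputable def rhok (k : ℕ) (n : ℕ) : ℝ :=
  if n = 0 then 0 else 1 + useq k (n - 1) / (useq k n + 1)

/-- Membership in `Ṽ`: a nonincreasing, finitely supported sequence
of nonnegative integers. -/
def IsVt (v : ℕ → ℕ) : Prop :=
  (∀ i j, i ≤ j → v j ≤ v i) ∧ ∃ s, ∀ i, s ≤ i → v i = 0

/-- The extension of `ρ_k` to `Ṽ`: `ρ_k(v) = Σ_i ρ_k(v_i)`, a finite sum since
`ρ_k(0) = 0` and `v` is finitely supported. -/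
noncomputable def rhokV (k : ℕ) (v : ℕ → ℕ) : ℝ := ∑ᶠ i, rhok k (v i)

/-- The element of `Ṽ` whose entries are those of the list `l` (then zeros). -/
def ofList (l : List ℕ) : ℕ → ℕ := fun i => l.getD i 0

namespace Aux

variable (k : ℕ)

lemma qge : (2:ℝ) ≤ (k:ℝ) + 2 := by have : (0:ℝ) ≤ (k:ℝ) := Nat.cast_nonneg k; linarith

lemma useq_rec (n : ℕ) : useq k (n+2) = ((k : ℝ) + 2) * useq k (n + 1) - useq k n := by rw [useq]

lemma useq_step : ∀ n, 0 ≤ useq k n ∧ useq k n + 1 ≤ useq k (n+1)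
  | 0 => by norm_num [useq]
  | (n+1) => by
    obtain ⟨h0, h1⟩ := useq_step n
    have hk : (0:ℝ) ≤ (k:ℝ) := Nat.cast_nonneg k
    constructor
    · nlinarith
    · rw [useq_rec]
      nlinarith

lemma useq_nonneg (n : ℕ) : 0 ≤ useq k n := (useq_step k n).1

lemma useq_mono : Monotone (useq k) :=
  monotone_nat_of_le_succ fun n => by nlinarith [(useq_step k n).2]

lemma one_le_useq (n : ℕ) : 1 ≤ useq k (n+1) := by
  have := useq_mono k (Nat.le_add_left 1 n)
  simpa [useq] using this

lemma useq_pos (n : ℕ) : 0 < useq k (n+1) := lt_of_lt_of_le one_pos (one_le_useq k n)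

lemma denom_pos (n : ℕ) : 0 < useq k n + 1 := by nlinarith [useq_nonneg k n]

lemma inv3 : ∀ n, (((k:ℝ)+2)^2 - 2) * useq k n ≤ ((k:ℝ)+2) * useq k (n+1)
  | 0 => by norm_num [useq]; positivity
  | (n+1) => by
    have ih := inv3 n
    have h0 := useq_nonneg k n
    have h1 := useq_nonneg k (n+1)
    have hk : (0:ℝ) ≤ (k:ℝ) := Nat.cast_nonneg k
    rw [useq_rec]
    nlinarith

lemma useq_two : useq k 2 = (k:ℝ)+2 := by simp [useq]
lemma useq_three : useq k 3 = ((k:ℝ)+2)^2 - 1 := by simp [useq]; ring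
lemma useq_four : useq k 4 = ((k:ℝ)+2)^3 - 2*((k:ℝ)+2) := by simp [useq]; ring
lemma useq_five : useq k 5 = ((k:ℝ)+2)^4 - 3*((k:ℝ)+2)^2 + 1 := by simp [useq]; ring

lemma id1 (n : ℕ) : ((k:ℝ)+2) * useq k (n+1) - useq k (n+2) = useq k n := by
  rw [useq_rec]; ring

lemma id2 (n : ℕ) : (((k:ℝ)+2)^2 - 1) * useq k (n+2) - ((k:ℝ)+2) * useq k (n+3) = useq k n := by
  rw [useq_rec k (n+1), useq_rec k n]; ring

/-! rhok lemmas -/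

lemma rhok_zero : rhok k 0 = 0 := rfl

lemma rhok_succ (j : ℕ) : rhok k (j+1) = 1 + useq k j / (useq k (j+1) + 1) := by
  simp [rhok]

lemma rhok_one : rhok k 1 = 1 := by simp [rhok, useq]

lemma rhok_two : rhok k 2 = 1 + 1/((k:ℝ)+3) := by
  rw [show rhok k 2 = 1 + useq k 1 / (useq k 2 + 1) from rhok_succ k 1, useq_two]
  norm_num [useq]
  ring

lemma rhok_three : rhok k 3 = 1 + 1/((k:ℝ)+2) := by
  have h2 : useq k 2 = (k:ℝ)+2 := useq_two k
  have h3 : useq k 3 = ((k:ℝ)+2)^2 - 1 := useq_three k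
  rw [show (3:ℕ) = 2+1 from rfl, rhok_succ, h2, h3]
  have hq := qge k
  congr 1
  rw [div_eq_div_iff (by nlinarith) (by nlinarith)]
  ring

lemma rhok_four : rhok k 4 = 1 + (((k:ℝ)+2)^2-1) / (((k:ℝ)+2)^3 - 2*((k:ℝ)+2) + 1) := by
  rw [show (4:ℕ) = 3+1 from rfl, rhok_succ, useq_three, useq_four]

lemma rhok_five : rhok k 5 = 1 + ((k:ℝ)+2)/(((k:ℝ)+2)^2-1) := by
  have hq := qge k
  rw [show (5:ℕ) = 4+1 from rfl, rhok_succ, useq_four, useq_five]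
  congr 1
  have d1 : ((k:ℝ)+2)^4 - 3*((k:ℝ)+2)^2 + 1 + 1 ≠ 0 := by nlinarith [sq_nonneg (((k:ℝ)+2)^2-2)]
  have d2 : ((k:ℝ)+2)^2 - 1 ≠ 0 := by nlinarith
  rw [div_eq_div_iff d1 d2]
  ring

lemma one_le_rhok (j : ℕ) : 1 ≤ rhok k (j+1) := by
  rw [rhok_succ]
  have := useq_nonneg k j
  have := denom_pos k (j+1)
  nlinarith [div_nonneg (useq_nonneg k j) (le_of_lt (denom_pos k (j+1)))]

lemma rhok_lt_upper (j : ℕ) :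
    rhok k (j+1) < 1 + ((k:ℝ)+2)/(((k:ℝ)+2)^2-2) := by
  have hq := qge k
  have h1 := inv3 k j
  have hd := denom_pos k (j+1)
  rw [rhok_succ]
  have h2 : useq k j / (useq k (j+1) + 1) < ((k:ℝ)+2)/(((k:ℝ)+2)^2-2) := by
    rw [div_lt_div_iff₀ hd (by nlinarith)]
    nlinarith
  linarith

lemma rhok_lt_up2 (j : ℕ) : rhok k (j+1) < 1 + 1/((k:ℝ)+1) := by
  have hq := qge k
  have h := rhok_lt_upper k j
  have h2 : ((k:ℝ)+2)/(((k:ℝ)+2)^2-2) ≤ 1/((k:ℝ)+1) := by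
    rw [div_le_div_iff₀ (by nlinarith) (by nlinarith)]
    nlinarith
  linarith

lemma rhok_gt_one {n : ℕ} (h : 2 ≤ n) : 1 < rhok k n := by
  obtain ⟨j, rfl⟩ := Nat.exists_eq_add_of_le h
  have h1 : 2 + j = (1+j) + 1 := by ring
  rw [h1, rhok_succ]
  have := useq_pos k j
  have hd := denom_pos k (1+j+1)
  have : 0 < useq k (1+j) / (useq k (1+j+1) + 1) := by
    apply div_pos
    · rw [show 1+j = j+1 from by ring]; exact useq_pos k j
    · exact hd
  linarith

lemma rhok_ge_three {n : ℕ} (h : 3 ≤ n) : 1 + 1/((k:ℝ)+2) ≤ rhok k n := by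
  obtain ⟨j, rfl⟩ := Nat.exists_eq_add_of_le h
  have h1 : 3 + j = (2+j) + 1 := by ring
  have hq := qge k
  rw [h1, rhok_succ]
  have key : ((k:ℝ)+2) * useq k (2+j) - useq k (2+j+1) = useq k (j+1) := by
    have := id1 k (j+1)
    rw [show j+1+1 = 2+j from by ring, show j+1+2 = 2+j+1 from by ring] at this
    exact this
  have h2 : 1/((k:ℝ)+2) ≤ useq k (2+j) / (useq k (2+j+1) + 1) := by
    rw [div_le_div_iff₀ (by nlinarith) (denom_pos k (2+j+1))]
    have := one_le_useq k j
    nlinarith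
  linarith

lemma rhok_gt_four {n : ℕ} (h : 4 ≤ n) : 1 + 1/((k:ℝ)+2) < rhok k n := by
  obtain ⟨j, rfl⟩ := Nat.exists_eq_add_of_le h
  have h1 : 4 + j = (3+j) + 1 := by ring
  have hq := qge k
  rw [h1, rhok_succ]
  have key : ((k:ℝ)+2) * useq k (3+j) - useq k (3+j+1) = useq k (j+2) := by
    have := id1 k (j+2)
    rw [show j+2+1 = 3+j from by ring, show j+2+2 = 3+j+1 from by ring] at this
    exact this
  have hu2 : ((k:ℝ)+2) ≤ useq k (j+2) := by
    have := useq_mono k (show 2 ≤ j+2 from by omega)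
    rw [useq_two] at this; exact this
  have h2 : 1/((k:ℝ)+2) < useq k (3+j) / (useq k (3+j+1) + 1) := by
    rw [div_lt_div_iff₀ (by nlinarith) (denom_pos k (3+j+1))]
    nlinarith
  linarith

lemma rhok_le_34 {n : ℕ} (h3 : 3 ≤ n) (h4 : n ≤ 4) :
    rhok k n ≤ 1 + ((k:ℝ)+2)/(((k:ℝ)+2)^2-1)
      - 1/((((k:ℝ)+2)^2-1)*(((k:ℝ)+2)^2+((k:ℝ)+2)-1)) := by
  have hq := qge k
  have e1 : (0:ℝ) < (k:ℝ)+2 := by linarith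
  have e2 : (0:ℝ) < ((k:ℝ)+2)^2-1 := by nlinarith
  have e3 : (0:ℝ) < ((k:ℝ)+2)^2+((k:ℝ)+2)-1 := by nlinarith
  have e4 : (0:ℝ) < ((k:ℝ)+2)^3 - 2*((k:ℝ)+2) + 1 := by nlinarith
  interval_cases n
  · rw [rhok_three]
    have key : 1 + ((k:ℝ)+2)/(((k:ℝ)+2)^2-1)
        - 1/((((k:ℝ)+2)^2-1)*(((k:ℝ)+2)^2+((k:ℝ)+2)-1)) - (1 + 1/((k:ℝ)+2))
        = 1/(((k:ℝ)+2)*(((k:ℝ)+2)^2+((k:ℝ)+2)-1)) := by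
      have := e1.ne'; have := e2.ne'; have := e3.ne'
      generalize (k:ℝ)+2 = q at *
      generalize hr : q^2+q-1 = r at *
      field_simp
      rw [← hr]
      ring
    nlinarith [key, one_div_pos.2 (mul_pos e1 e3)]
  · rw [rhok_four]
    have key : 1 + ((k:ℝ)+2)/(((k:ℝ)+2)^2-1)
        - 1/((((k:ℝ)+2)^2-1)*(((k:ℝ)+2)^2+((k:ℝ)+2)-1))
        - (1 + (((k:ℝ)+2)^2-1) / (((k:ℝ)+2)^3 - 2*((k:ℝ)+2) + 1)) = 0 := by
      have hfac : ((k:ℝ)+2)^3 - 2*((k:ℝ)+2) + 1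
          = (((k:ℝ)+2)-1)*(((k:ℝ)+2)^2+((k:ℝ)+2)-1) := by ring
      rw [hfac]
      have m1 : (((k:ℝ)+2)-1) ≠ 0 := by nlinarith
      have m2 : (((k:ℝ)+2)^2-1) ≠ 0 := e2.ne'
      have m3 : (((k:ℝ)+2)^2+((k:ℝ)+2)-1) ≠ 0 := e3.ne'
      generalize (k:ℝ)+2 = q at *
      generalize hr : q^2+q-1 = r at *
      field_simp
      rw [← hr]
      ring
    linarith [key]


lemma rhok_ge_six_lb {n : ℕ} (h : 6 ≤ n) :
    1 + ((k:ℝ)+2)/(((k:ℝ)+2)^2-1) < rhok k n := by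
  obtain ⟨j, rfl⟩ := Nat.exists_eq_add_of_le h
  have hq := qge k
  rw [show 6+j = (5+j)+1 from by ring, rhok_succ]
  have key : (((k:ℝ)+2)^2-1) * useq k (5+j) - ((k:ℝ)+2) * useq k (5+j+1) = useq k (j+3) := by
    have := id2 k (j+3)
    rw [show j+3+2 = 5+j from by ring, show j+3+3 = 5+j+1 from by ring] at this
    exact this
  have hu3 : ((k:ℝ)+2)^2 - 1 ≤ useq k (j+3) := by
    have := useq_mono k (show 3 ≤ j+3 from by omega)
    rw [useq_three] at this; exact this
  have h2 : ((k:ℝ)+2)/(((k:ℝ)+2)^2-1) < useq k (5+j) / (useq k (5+j+1) + 1) := by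
    rw [div_lt_div_iff₀ (by nlinarith) (denom_pos k (5+j+1))]
    nlinarith
  linarith

lemma rhok_ge_six_ub {n : ℕ} (h : 6 ≤ n) :
    rhok k n ≤ 1 + ((k:ℝ)+2)/(((k:ℝ)+2)^2-1)
      + ((k:ℝ)+2)^3/(((((k:ℝ)+2)^2-2)^3)*(((k:ℝ)+2)^2-1)) := by
  obtain ⟨j, rfl⟩ := Nat.exists_eq_add_of_le h
  have hq := qge k
  have e2 : (0:ℝ) < ((k:ℝ)+2)^2-1 := by nlinarith
  have e5 : (0:ℝ) < ((k:ℝ)+2)^2-2 := by nlinarith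
  rw [show 6+j = (5+j)+1 from by ring, rhok_succ]
  have key : (((k:ℝ)+2)^2-1) * useq k (5+j) - ((k:ℝ)+2) * useq k (5+j+1) = useq k (j+3) := by
    have := id2 k (j+3)
    rw [show j+3+2 = 5+j from by ring, show j+3+3 = 5+j+1 from by ring] at this
    exact this
  have i1 := inv3 k (j+3)
  have i2 := inv3 k (j+4)
  have i3 := inv3 k (j+5)
  rw [show j+3+1 = j+4 from rfl] at i1
  rw [show j+4+1 = j+5 from rfl] at i2
  rw [show j+5+1 = j+6 from rfl] at i3
  have hn4 := useq_nonneg k (j+4)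
  have hn5 := useq_nonneg k (j+5)
  have hn6 := useq_nonneg k (j+6)
  have chain : (((k:ℝ)+2)^2-2)^3 * useq k (j+3) ≤ ((k:ℝ)+2)^3 * useq k (j+6) := by
    nlinarith [mul_le_mul_of_nonneg_left i1 (by positivity : (0:ℝ) ≤ (((k:ℝ)+2)^2-2)^2),
      mul_le_mul_of_nonneg_left i2 (by nlinarith : (0:ℝ) ≤ (((k:ℝ)+2)^2-2)*((k:ℝ)+2)),
      mul_le_mul_of_nonneg_left i3 (by positivity : (0:ℝ) ≤ ((k:ℝ)+2)^2)]
  have hpos6 : 0 < useq k (j+6) := by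
    rw [show j+6 = (j+5)+1 from rfl]; exact useq_pos k (j+5)
  have hd := denom_pos k (5+j+1)
  have h1 : useq k (5+j) / (useq k (5+j+1) + 1) - ((k:ℝ)+2)/(((k:ℝ)+2)^2-1)
      = (useq k (j+3) - ((k:ℝ)+2)) / ((((k:ℝ)+2)^2-1) * (useq k (5+j+1) + 1)) := by
    rw [div_sub_div _ _ (by positivity) e2.ne']
    congr 1
    · linarith [key]
    · ring
  have h56 : useq k (5+j+1) = useq k (j+6) := by congr 1; omega
  have h2 : (useq k (j+3) - ((k:ℝ)+2)) / ((((k:ℝ)+2)^2-1) * (useq k (5+j+1) + 1))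
      ≤ useq k (j+3) / ((((k:ℝ)+2)^2-1) * useq k (j+6)) := by
    apply div_le_div₀ (useq_nonneg k (j+3)) (by linarith) (by positivity)
    rw [h56]; nlinarith
  have h3 : useq k (j+3) / ((((k:ℝ)+2)^2-1) * useq k (j+6))
      ≤ ((k:ℝ)+2)^3/(((((k:ℝ)+2)^2-2)^3)*(((k:ℝ)+2)^2-1)) := by
    rw [div_le_div_iff₀ (by positivity) (by positivity)]
    nlinarith [chain]
  linarith

lemma rhok_eq_one {n : ℕ} (h1 : 1 ≤ n) (h : rhok k n ≤ 1) : n = 1 := by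
  by_contra hne
  have h2 : 2 ≤ n := by omega
  linarith [rhok_gt_one k h2]

lemma getD_repl {r i : ℕ} (a : ℕ) (h : i < r) : (List.replicate r a).getD i 0 = a := by
  rw [List.getD_eq_getElem?_getD, List.getElem?_replicate, if_pos h]; rfl

lemma rhokV_eq_sum (L : List ℕ) :
    rhokV k (ofList L) = ∑ i ∈ Finset.range L.length, rhok k (L.getD i 0) := by
  rw [rhokV]
  apply finsum_eq_finset_sum_of_support_subset
  intro i hi
  simp only [Function.mem_support] at hi
  simp only [Finset.coe_range, Set.mem_Iio, Finset.mem_range]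
  by_contra hmem
  push_neg at hmem
  have h0 : ofList L i = 0 := List.getD_eq_default _ _ hmem
  rw [h0] at hi
  simp [rhok] at hi

lemma comp1 : rhokV k (ofList (List.replicate (k + 4) 1)) = (k:ℝ) + 4 := by
  rw [rhokV_eq_sum, List.length_replicate]
  rw [Finset.sum_congr rfl (fun i hi => by
    rw [getD_repl 1 (Finset.mem_range.1 hi), rhok_one])]
  simp

lemma comp2 : rhokV k (ofList (List.replicate (k + 3) 2)) = (k:ℝ) + 4 := by
  rw [rhokV_eq_sum, List.length_replicate]
  rw [Finset.sum_congr rfl (fun i hi => by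
    rw [getD_repl 2 (Finset.mem_range.1 hi), rhok_two])]
  rw [Finset.sum_const, Finset.card_range, nsmul_eq_mul]
  have : ((k:ℝ)+3) ≠ 0 := by positivity
  push_cast
  field_simp
  ring

lemma comp3 : rhokV k (ofList (List.replicate (k + 2) 3 ++ [1])) = (k:ℝ) + 4 := by
  rw [rhokV_eq_sum]
  have hlen : (List.replicate (k + 2) 3 ++ [1]).length = k + 3 := by simp
  rw [hlen, Finset.sum_range_succ]
  have hlast : (List.replicate (k + 2) 3 ++ [1]).getD (k+2) 0 = 1 := by
    rw [List.getD_append_right _ _ _ _ (by simp)]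
    simp
  have hmain : ∀ i ∈ Finset.range (k+2),
      rhok k ((List.replicate (k + 2) 3 ++ [1]).getD i 0) = 1 + 1/((k:ℝ)+2) := by
    intro i hi
    have hi' := Finset.mem_range.1 hi
    rw [List.getD_append _ _ _ _ (by simpa using hi'), getD_repl 3 hi', rhok_three]
  rw [Finset.sum_congr rfl hmain, hlast, rhok_one]
  rw [Finset.sum_const, Finset.card_range, nsmul_eq_mul]
  have : ((k:ℝ)+2) ≠ 0 := by positivity
  push_cast
  field_simp
  ring

lemma comp4 : rhokV k (ofList (List.replicate (k + 1) 5 ++ [2, 1])) = (k:ℝ) + 4 := by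
  rw [rhokV_eq_sum]
  have hlen : (List.replicate (k + 1) 5 ++ [2, 1]).length = k + 3 := by simp
  rw [hlen, Finset.sum_range_succ, Finset.sum_range_succ]
  have h1 : (List.replicate (k + 1) 5 ++ [2, 1]).getD (k+1) 0 = 2 := by
    rw [List.getD_append_right _ _ _ _ (by simp)]
    simp
  have h2 : (List.replicate (k + 1) 5 ++ [2, 1]).getD (k+2) 0 = 1 := by
    rw [List.getD_append_right _ _ _ _ (by simp)]
    simp [show k+2 - (k+1) = 1 from by omega]
  have hmain : ∀ i ∈ Finset.range (k+1),
      rhok k ((List.replicate (k + 1) 5 ++ [2, 1]).getD i 0)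
        = 1 + ((k:ℝ)+2)/(((k:ℝ)+2)^2-1) := by
    intro i hi
    have hi' := Finset.mem_range.1 hi
    rw [List.getD_append _ _ _ _ (by simpa using hi'), getD_repl 5 hi', rhok_five]
  rw [Finset.sum_congr rfl hmain, h1, h2, rhok_one, rhok_two]
  rw [Finset.sum_const, Finset.card_range, nsmul_eq_mul]
  have hq := qge k
  rw [show ((k:ℝ)+2)^2-1 = ((k:ℝ)+1)*((k:ℝ)+3) from by ring]
  have n1 : ((k:ℝ)+1) ≠ 0 := by positivity
  have n3 : ((k:ℝ)+3) ≠ 0 := by positivity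
  push_cast
  field_simp
  ring

lemma one_le_rhok' {n : ℕ} (h : 1 ≤ n) : 1 ≤ rhok k n := by
  obtain ⟨j, rfl⟩ := Nat.exists_eq_add_of_le h
  rw [show 1+j = j+1 from by ring]; exact one_le_rhok k j

lemma rhok_lt_up2' {n : ℕ} (h : 1 ≤ n) : rhok k n < 1 + 1/((k:ℝ)+1) := by
  obtain ⟨j, rfl⟩ := Nat.exists_eq_add_of_le h
  rw [show 1+j = j+1 from by ring]; exact rhok_lt_up2 k j

lemma rhok_term_ub {n : ℕ} (h : 1 ≤ n) :
    rhok k n - (1 + 1/((k:ℝ)+2)) < 2/(((k:ℝ)+2)*(((k:ℝ)+2)^2-2)) := by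
  obtain ⟨j, rfl⟩ := Nat.exists_eq_add_of_le h
  rw [show 1+j = j+1 from by ring]
  have h1 := rhok_lt_upper k j
  have hq := qge k
  have he : ((k:ℝ)+2)/(((k:ℝ)+2)^2-2) - 1/((k:ℝ)+2) = 2/(((k:ℝ)+2)*(((k:ℝ)+2)^2-2)) := by
    rw [div_sub_div _ _ (by nlinarith : ((k:ℝ)+2)^2-2 ≠ 0) (by positivity : ((k:ℝ)+2) ≠ 0)]
    congr 1
    · ring
    · ring
  linarith

lemma lemE (E a b c : ℝ) (hKey : E + c*(1+1/((k:ℝ)+2)) + b*(1+1/((k:ℝ)+3)) + a = (k:ℝ)+4)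
    (habc : a+b+c = (k:ℝ)+3) : E = (a*((k:ℝ)+2) - c)/(((k:ℝ)+2)*((k:ℝ)+3)) := by
  have h2 : ((k:ℝ)+2) ≠ 0 := by positivity
  have h3 : ((k:ℝ)+3) ≠ 0 := by positivity
  field_simp at hKey
  rw [eq_div_iff (by positivity)]
  linear_combination hKey - (((k:ℝ)+2)*((k:ℝ)+4))*habc


lemma q2pos : (0:ℝ) < ((k:ℝ)+2)^2-2 := by have := qge k; nlinarith
lemma e2pos : (0:ℝ) < ((k:ℝ)+2)^2-1 := by have := qge k; nlinarith
lemma e3pos : (0:ℝ) < ((k:ℝ)+2)^2+((k:ℝ)+2)-1 := by have := qge k; nlinarith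

lemma contra1 (A C : ℝ) (hA : 2 ≤ A) (hC0 : (0:ℝ) ≤ C) (hC : C ≤ (k:ℝ)+1)
    (hub2 : (A*((k:ℝ)+2) - C) * (((k:ℝ)+2)*(((k:ℝ)+2)^2-2)) < 2*C*(((k:ℝ)+2)*((k:ℝ)+3))) :
    False := by
  have hk0 : (0:ℝ) ≤ (k:ℝ) := Nat.cast_nonneg k
  nlinarith [hub2, mul_le_mul_of_nonneg_right
      (by nlinarith [mul_le_mul_of_nonneg_right hA (by positivity : (0:ℝ) ≤ (k:ℝ)+2)] :
        2*((k:ℝ)+2) - C ≤ A*((k:ℝ)+2) - C)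
      (by nlinarith : (0:ℝ) ≤ ((k:ℝ)+2)*(((k:ℝ)+2)^2-2)),
    mul_le_mul_of_nonneg_right hC
      (by positivity : (0:ℝ) ≤ ((k:ℝ)+2)^2*((k:ℝ)+4)),
    mul_nonneg hk0 (by positivity : (0:ℝ) ≤ ((k:ℝ)+2)^2*((k:ℝ)+3))]

lemma contra2 (C : ℝ) (hC0 : (0:ℝ) ≤ C) (hC : C ≤ (k:ℝ))
    (hub2 : (1*((k:ℝ)+2) - C) * (((k:ℝ)+2)*(((k:ℝ)+2)^2-2)) < 2*C*(((k:ℝ)+2)*((k:ℝ)+3))) :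
    False := by
  have hk0 : (0:ℝ) ≤ (k:ℝ) := Nat.cast_nonneg k
  nlinarith [hub2, mul_le_mul_of_nonneg_right hC
    (by positivity : (0:ℝ) ≤ ((k:ℝ)+2)^2*((k:ℝ)+4))]

set_option maxHeartbeats 2000000 in
lemma forward (v : ℕ → ℕ) (mono : ∀ i j, i ≤ j → v j ≤ v i) (s : ℕ) (hs : ∀ i, s ≤ i → v i = 0)
    (hsum : rhokV k v = (k : ℝ) + 4) :
    v = ofList (List.replicate (k + 4) 1) ∨
      v = ofList (List.replicate (k + 3) 2) ∨
      v = ofList (List.replicate (k + 2) 3 ++ [1]) ∨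
      v = ofList (List.replicate (k + 1) 5 ++ [2, 1]) := by
  have hq := qge k
  have hk0 : (0:ℝ) ≤ (k:ℝ) := Nat.cast_nonneg k
  have hex0 : ∃ i, v i = 0 := ⟨s, hs s le_rfl⟩
  set m := Nat.find hex0 with hmdef
  have hvm : v m = 0 := Nat.find_spec hex0
  have hlow : ∀ i, i < m → 1 ≤ v i := fun i hi =>
    Nat.one_le_iff_ne_zero.2 (Nat.find_min hex0 hi)
  have hzero : ∀ i, m ≤ i → v i = 0 := fun i hi => Nat.le_zero.1 (hvm ▸ mono m i hi)
  clear_value m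
  have hsum' : ∑ i ∈ Finset.range m, rhok k (v i) = (k:ℝ)+4 := by
    rw [rhokV] at hsum
    rw [← hsum]
    symm
    apply finsum_eq_finset_sum_of_support_subset
    intro i hi
    simp only [Function.mem_support] at hi
    simp only [Finset.coe_range, Set.mem_Iio]
    by_contra hmem
    push_neg at hmem
    rw [hzero i hmem] at hi
    simp [rhok] at hi
  have hub : (m:ℝ) ≤ (k:ℝ)+4 := by
    rw [← hsum']
    calc (m:ℝ) = ∑ _i ∈ Finset.range m, (1:ℝ) := by simp
    _ ≤ _ := Finset.sum_le_sum fun i hi => one_le_rhok' k (hlow i (Finset.mem_range.1 hi))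
  have hm1 : 1 ≤ m := by
    rcases Nat.eq_zero_or_pos m with h0 | h; swap; · exact h
    rw [h0] at hsum'
    simp only [Finset.range_zero, Finset.sum_empty] at hsum'
    linarith
  have hlbr : ((k:ℝ)+4) < (m:ℝ)*(1+1/((k:ℝ)+1)) := by
    rw [← hsum']
    calc ∑ i ∈ Finset.range m, rhok k (v i)
        < ∑ _i ∈ Finset.range m, (1+1/((k:ℝ)+1)) :=
          Finset.sum_lt_sum_of_nonempty (by simp [Finset.nonempty_range_iff]; omega)
            (fun i hi => rhok_lt_up2' k (hlow i (Finset.mem_range.1 hi)))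
    _ = (m:ℝ)*(1+1/((k:ℝ)+1)) := by
          rw [Finset.sum_const, Finset.card_range, nsmul_eq_mul]
  have hmk : m = k+3 ∨ m = k+4 := by
    have h1 : m ≤ k+4 := by exact_mod_cast hub
    have h2 : (k+4)*(k+1) < m*(k+2) := by
      have e1 : (1+1/((k:ℝ)+1))*((k:ℝ)+1) = (k:ℝ)+2 := by
        have h0 : ((k:ℝ)+1) ≠ 0 := by positivity
        field_simp
        ring
      have h3 := mul_lt_mul_of_pos_right hlbr (show (0:ℝ) < (k:ℝ)+1 by positivity)
      rw [mul_assoc, e1] at h3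
      exact_mod_cast h3
    rcases Nat.lt_or_ge m (k+3) with h | h
    · exfalso
      have h4 : m*(k+2) ≤ (k+2)*(k+2) := Nat.mul_le_mul_right _ (by omega)
      nlinarith
    · omega
  rcases hmk with hm | hm
  swap
  · -- m = k + 4 : all ones
    left
    have hone : ∀ i ∈ Finset.range m, rhok k (v i) = 1 := by
      have hzz : ∀ i ∈ Finset.range m, rhok k (v i) - 1 = 0 := by
        apply (Finset.sum_eq_zero_iff_of_nonneg
          (fun i hi => sub_nonneg.2 (one_le_rhok' k (hlow i (Finset.mem_range.1 hi))))).1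
        rw [Finset.sum_sub_distrib, hsum']
        simp [hm]
      intro i hi
      have := hzz i hi
      linarith
    funext i
    show v i = (List.replicate (k+4) 1).getD i 0
    by_cases hi : i < k + 4
    · rw [getD_repl 1 hi]
      exact rhok_eq_one k (hlow i (by omega))
        (le_of_eq (hone i (Finset.mem_range.2 (by omega))))
    · rw [List.getD_eq_default _ _ (by simp only [List.length_replicate]; omega)]
      exact hzero i (by omega)
  · -- m = k + 3
    have hex2 : ∃ i, v i ≤ 2 := ⟨m, by omega⟩
    set c := Nat.find hex2 with hcdef
    have hc2 : v c ≤ 2 := Nat.find_spec hex2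
    have hc3 : ∀ i, i < c → 3 ≤ v i := fun i hi => by have := Nat.find_min hex2 hi; omega
    have hcge : ∀ i, c ≤ i → v i ≤ 2 := fun i hi => le_trans (mono c i hi) hc2
    have hex1 : ∃ i, v i ≤ 1 := ⟨m, by omega⟩
    set cb := Nat.find hex1 with hcbdef
    have hcb1 : ∀ i, cb ≤ i → v i ≤ 1 := fun i hi => le_trans (mono cb i hi) (Nat.find_spec hex1)
    have hcb2 : ∀ i, i < cb → 2 ≤ v i := fun i hi => by have := Nat.find_min hex1 hi; omega
    have hccb : c ≤ cb := Nat.find_min' hex2 ((Nat.find_spec hex1 : v cb ≤ 1).trans one_le_two)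
    have hcbm : cb ≤ m := Nat.find_min' hex1 (by omega : v m ≤ 1)
    have hcm : c ≤ m := le_trans hccb hcbm
    clear_value c cb
    have h2sum : ∑ i ∈ Finset.Ico c cb, rhok k (v i) = ((cb - c : ℕ):ℝ)*(1+1/((k:ℝ)+3)) := by
      rw [Finset.sum_congr rfl (fun i hi => by
        have h2 : v i = 2 := le_antisymm (hcge i (Finset.mem_Ico.1 hi).1)
          (hcb2 i (Finset.mem_Ico.1 hi).2)
        rw [h2, rhok_two]), Finset.sum_const, Nat.card_Ico, nsmul_eq_mul]
    have h1sum : ∑ i ∈ Finset.Ico cb m, rhok k (v i) = ((m - cb : ℕ):ℝ) := by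
      rw [Finset.sum_congr rfl (fun i hi => by
        have h1 : v i = 1 := le_antisymm (hcb1 i (Finset.mem_Ico.1 hi).1)
          (hlow i (Finset.mem_Ico.1 hi).2)
        rw [h1, rhok_one]), Finset.sum_const, Nat.card_Ico, nsmul_eq_mul, mul_one]
    obtain ⟨E, hEdef⟩ : ∃ E : ℝ, E = ∑ i ∈ Finset.Ico 0 c, (rhok k (v i) - (1+1/((k:ℝ)+2))) :=
      ⟨_, rfl⟩
    have hEsum : ∑ i ∈ Finset.Ico 0 c, rhok k (v i) = E + (c:ℝ)*(1+1/((k:ℝ)+2)) := by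
      rw [hEdef, Finset.sum_sub_distrib, Finset.sum_const, Nat.card_Ico, Nat.sub_zero,
        nsmul_eq_mul]
      ring
    have habc : (m - cb) + (cb - c) + c = k + 3 := by omega
    have habcR : ((m - cb : ℕ):ℝ) + ((cb - c : ℕ):ℝ) + (c:ℝ) = (k:ℝ)+3 := by exact_mod_cast habc
    have hKey : E + (c:ℝ)*(1+1/((k:ℝ)+2)) + ((cb - c:ℕ):ℝ)*(1+1/((k:ℝ)+3))
        + ((m - cb:ℕ):ℝ) = (k:ℝ)+4 := by
      have h0 : ∑ i ∈ Finset.Ico 0 m, rhok k (v i) = (k:ℝ)+4 := by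
        rw [← Finset.range_eq_Ico]; exact hsum'
      rw [← Finset.sum_Ico_consecutive _ (Nat.zero_le cb) hcbm,
        ← Finset.sum_Ico_consecutive _ (Nat.zero_le c) hccb, h2sum, h1sum, hEsum] at h0
      linarith
    have hEform := lemE k E ((m-cb:ℕ):ℝ) ((cb-c:ℕ):ℝ) (c:ℝ) hKey habcR
    clear hmdef hcdef hcbdef hex0 hex2 hex1 hsum hsum' hlbr hub hKey
    have hdpos : (0:ℝ) < ((k:ℝ)+2)*((k:ℝ)+3) := by positivity
    by_cases hall3 : ∀ i, i < c → v i ≤ 3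
    · -- every part ≥ 3 equals 3
      have hE0 : E = 0 := by
        rw [hEdef]
        refine Finset.sum_eq_zero fun i hi => ?_
        have h3 : v i = 3 := le_antisymm (hall3 i (Finset.mem_Ico.1 hi).2)
          (hc3 i (Finset.mem_Ico.1 hi).2)
        rw [h3, rhok_three]; ring
      rw [hE0] at hEform
      have hacR : ((m-cb:ℕ):ℝ)*((k:ℝ)+2) = (c:ℝ) := by
        rcases div_eq_zero_iff.1 hEform.symm with h | h
        · linarith
        · exact absurd h hdpos.ne'
      have hacN : (m-cb)*(k+2) = c := by exact_mod_cast hacR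
      rcases Nat.lt_or_ge (m-cb) 2 with ha2 | ha2
      · rcases Nat.lt_or_ge (m-cb) 1 with ha0 | ha1
        · -- a = 0 : v = 2^{k+3}
          right; left
          have ha0' : m - cb = 0 := by omega
          have hc0 : c = 0 := by rw [ha0'] at hacN; omega
          funext i
          show v i = (List.replicate (k+3) 2).getD i 0
          by_cases hi : i < k+3
          · rw [getD_repl 2 hi]
            exact le_antisymm (hcge i (by omega)) (hcb2 i (by omega))
          · rw [List.getD_eq_default _ _ (by simp only [List.length_replicate]; omega)]
            exact hzero i (by omega)
        · -- a = 1 : v = (3^{k+2},1)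
          right; right; left
          have ha1' : m - cb = 1 := by omega
          have hcv : c = k+2 := by rw [ha1'] at hacN; omega
          have hcbv : cb = k+2 := by omega
          funext i
          show v i = (List.replicate (k+2) 3 ++ [1]).getD i 0
          by_cases hi : i < k+2
          · rw [List.getD_append _ _ _ _ (by simp only [List.length_replicate]; omega),
              getD_repl 3 hi]
            exact le_antisymm (hall3 i (by omega)) (hc3 i (by omega))
          · by_cases hi2 : i < k+3
            · have hieq : i = k+2 := by omega
              subst hieq
              rw [List.getD_append_right _ _ _ _ (by simp only [List.length_replicate]; omega)]
              simp only [List.length_replicate, Nat.sub_self, List.getD]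
              norm_num
              exact le_antisymm (hcb1 _ (by omega)) (hlow _ (by omega))
            · rw [List.getD_eq_default _ _ (by
                simp only [List.length_append, List.length_replicate, List.length_singleton]
                omega)]
              exact hzero i (by omega)
      · -- a ≥ 2 : impossible
        exfalso
        have h5 : 2*(k+2) ≤ (m-cb)*(k+2) := Nat.mul_le_mul_right _ ha2
        have h6 : 2*(k+2) ≤ c := by omega
        omega
    · -- some part ≥ 4
      push_neg at hall3
      obtain ⟨i0, hi0c, hi04⟩ := hall3
      have hi04' : 4 ≤ v i0 := by omega
      have hcpos : 0 < c := by omega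
      have hEpos : 0 < E := by
        rw [hEdef]
        have h := Finset.sum_lt_sum (f := fun _ => (0:ℝ))
          (g := fun i => rhok k (v i) - (1+1/((k:ℝ)+2))) (s := Finset.Ico 0 c)
          (fun i hi => sub_nonneg.2 (rhok_ge_three k (hc3 i (Finset.mem_Ico.1 hi).2)))
          ⟨i0, Finset.mem_Ico.2 ⟨Nat.zero_le _, hi0c⟩, sub_pos.2 (rhok_gt_four k hi04')⟩
        simpa using h
      have hq2 : (0:ℝ) < ((k:ℝ)+2)^2-2 := q2pos k
      have hEub : E < (c:ℝ) * (2/(((k:ℝ)+2)*(((k:ℝ)+2)^2-2))) := by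
        rw [hEdef]
        calc ∑ i ∈ Finset.Ico 0 c, (rhok k (v i) - (1+1/((k:ℝ)+2)))
            < ∑ _i ∈ Finset.Ico 0 c, 2/(((k:ℝ)+2)*(((k:ℝ)+2)^2-2)) :=
              Finset.sum_lt_sum_of_nonempty (by rw [Finset.nonempty_Ico]; omega)
                (fun i hi => rhok_term_ub k (by
                  have := hc3 i (Finset.mem_Ico.1 hi).2; omega))
        _ = (c:ℝ) * (2/(((k:ℝ)+2)*(((k:ℝ)+2)^2-2))) := by
              rw [Finset.sum_const, Nat.card_Ico, nsmul_eq_mul, Nat.sub_zero]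
      have hEN : E*(((k:ℝ)+2)*((k:ℝ)+3)) = ((m-cb:ℕ):ℝ)*((k:ℝ)+2) - (c:ℝ) := by
        rw [hEform]
        exact div_mul_cancel₀ _ hdpos.ne'
      have hNpos : 0 < ((m-cb:ℕ):ℝ)*((k:ℝ)+2) - (c:ℝ) := by
        have h := mul_pos hEpos hdpos
        rw [hEN] at h
        exact h
      have haN1 : 1 ≤ m - cb := by
        by_contra h
        push_neg at h
        have h0 : m - cb = 0 := by omega
        rw [h0] at hNpos
        push_cast at hNpos
        have : (0:ℝ) ≤ (c:ℝ) := Nat.cast_nonneg c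
        linarith
      have hXpos : (0:ℝ) < ((k:ℝ)+2)*(((k:ℝ)+2)^2-2) := by positivity
      have hub2 : (((m-cb:ℕ):ℝ)*((k:ℝ)+2) - (c:ℝ)) * (((k:ℝ)+2)*(((k:ℝ)+2)^2-2))
          < 2*(c:ℝ)*(((k:ℝ)+2)*((k:ℝ)+3)) := by
        have h1 : E * (((k:ℝ)+2)*((k:ℝ)+3))
            < (c:ℝ)*(2/(((k:ℝ)+2)*(((k:ℝ)+2)^2-2))) * (((k:ℝ)+2)*((k:ℝ)+3)) :=
          mul_lt_mul_of_pos_right hEub hdpos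
        rw [hEN] at h1
        have h2 := mul_lt_mul_of_pos_right h1 hXpos
        have he : (c:ℝ)*(2/(((k:ℝ)+2)*(((k:ℝ)+2)^2-2))) * (((k:ℝ)+2)*((k:ℝ)+3))
            * (((k:ℝ)+2)*(((k:ℝ)+2)^2-2)) = 2*(c:ℝ)*(((k:ℝ)+2)*((k:ℝ)+3)) := by
          field_simp
        rw [he] at h2
        exact h2
      have hCnn : (0:ℝ) ≤ (c:ℝ) := Nat.cast_nonneg c
      have haN2 : m - cb = 1 := by
        by_contra h
        have h2 : 2 ≤ m - cb := by omega
        have hcle : c ≤ k+1 := by omega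
        have hA : (2:ℝ) ≤ ((m-cb:ℕ):ℝ) := by exact_mod_cast h2
        have hC : (c:ℝ) ≤ (k:ℝ)+1 := by exact_mod_cast hcle
        exact contra1 k ((m-cb:ℕ):ℝ) (c:ℝ) hA hCnn hC hub2
      rw [haN2] at hNpos hub2 hEN hEform
      push_cast at hNpos hub2 hEN hEform
      have hck2 : c < k+2 := by
        have : (c:ℝ) < (k:ℝ)+2 := by linarith
        exact_mod_cast this
      have hcval : c = k+1 := by
        by_contra h
        have hcle : c ≤ k := by omega
        have hC : (c:ℝ) ≤ (k:ℝ) := by exact_mod_cast hcle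
        exact contra2 k (c:ℝ) hCnn hC (by linarith [hub2])
      have hbN : cb - c = 1 := by omega
      have hcbv : cb = k+2 := by omega
      have hcR : (c:ℝ) = (k:ℝ)+1 := by rw [hcval]; push_cast; ring
      have hEval : E = 1/(((k:ℝ)+2)*((k:ℝ)+3)) := by
        rw [hEform, hcR]
        ring
      -- second-stage analysis: all remaining parts are 5
      obtain ⟨T, hTdef⟩ : ∃ T : ℝ,
          T = ∑ i ∈ Finset.Ico 0 c, (rhok k (v i) - (1+((k:ℝ)+2)/(((k:ℝ)+2)^2-1))) := ⟨_, rfl⟩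
      have e2 : (0:ℝ) < ((k:ℝ)+2)^2-1 := e2pos k
      have e3 : (0:ℝ) < ((k:ℝ)+2)^2+((k:ℝ)+2)-1 := e3pos k
      have hTE : T = E + (c:ℝ)*(1/((k:ℝ)+2) - ((k:ℝ)+2)/(((k:ℝ)+2)^2-1)) := by
        have hterm : ∀ i ∈ Finset.Ico 0 c,
            rhok k (v i) - (1+((k:ℝ)+2)/(((k:ℝ)+2)^2-1))
              = (rhok k (v i) - (1+1/((k:ℝ)+2))) + (1/((k:ℝ)+2) - ((k:ℝ)+2)/(((k:ℝ)+2)^2-1)) :=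
          fun i _ => by ring
        rw [hTdef, Finset.sum_congr rfl hterm, Finset.sum_add_distrib, Finset.sum_const,
          Nat.card_Ico, Nat.sub_zero, nsmul_eq_mul, ← hEdef]
      have hTval : T = 0 := by
        rw [hTE, hEval, hcR]
        have h1 : ((k:ℝ)+2)^2-1 = ((k:ℝ)+1)*((k:ℝ)+3) := by ring
        rw [h1]
        have n1 : ((k:ℝ)+1) ≠ 0 := by positivity
        have n2 : ((k:ℝ)+2) ≠ 0 := by positivity
        have n3 : ((k:ℝ)+3) ≠ 0 := by positivity
        field_simp
        ring
      have hex5 : ∃ i, v i ≤ 5 := ⟨m, by omega⟩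
      set c6 := Nat.find hex5 with hc6def
      have h6hi : ∀ i, i < c6 → 6 ≤ v i := fun i hi => by have := Nat.find_min hex5 hi; omega
      have h6lo : ∀ i, c6 ≤ i → v i ≤ 5 := fun i hi =>
        le_trans (mono c6 i hi) (Nat.find_spec hex5)
      have hex4 : ∃ i, v i ≤ 4 := ⟨m, by omega⟩
      set c5 := Nat.find hex4 with hc5def
      have h5hi : ∀ i, i < c5 → 5 ≤ v i := fun i hi => by have := Nat.find_min hex4 hi; omega
      have h5lo : ∀ i, c5 ≤ i → v i ≤ 4 := fun i hi =>
        le_trans (mono c5 i hi) (Nat.find_spec hex4)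
      have h65 : c6 ≤ c5 := Nat.find_min' hex5 ((Nat.find_spec hex4 : v c5 ≤ 4).trans (by norm_num))
      have h5c : c5 ≤ c := Nat.find_min' hex4 (by omega : v c ≤ 4)
      clear_value c6 c5
      clear hc6def hc5def hex5 hex4
      have hsplitT : ∑ i ∈ Finset.Ico 0 c6, (rhok k (v i) - (1+((k:ℝ)+2)/(((k:ℝ)+2)^2-1)))
          + ∑ i ∈ Finset.Ico c6 c5, (rhok k (v i) - (1+((k:ℝ)+2)/(((k:ℝ)+2)^2-1)))
          + ∑ i ∈ Finset.Ico c5 c, (rhok k (v i) - (1+((k:ℝ)+2)/(((k:ℝ)+2)^2-1))) = T := by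
        rw [hTdef, ← Finset.sum_Ico_consecutive _ (Nat.zero_le c5) h5c,
          ← Finset.sum_Ico_consecutive _ (Nat.zero_le c6) h65]
      have hMid : ∑ i ∈ Finset.Ico c6 c5, (rhok k (v i) - (1+((k:ℝ)+2)/(((k:ℝ)+2)^2-1))) = 0 :=
        Finset.sum_eq_zero fun i hi => by
          have h5 : v i = 5 := le_antisymm (h6lo i (Finset.mem_Ico.1 hi).1)
            (h5hi i (Finset.mem_Ico.1 hi).2)
          rw [h5, rhok_five]; ring
      have hbpos : (0:ℝ) < 1/((((k:ℝ)+2)^2-1)*(((k:ℝ)+2)^2+((k:ℝ)+2)-1)) := one_div_pos.2 (mul_pos e2 e3)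
      by_cases hc60 : c6 = 0
      · right; right; right
        have hc5c : c5 = c := by
          by_contra hne
          have hlt : c5 < c := lt_of_le_of_ne h5c hne
          have hDneg : ∑ i ∈ Finset.Ico c5 c, (rhok k (v i) - (1+((k:ℝ)+2)/(((k:ℝ)+2)^2-1))) < 0 := by
            have h := Finset.sum_lt_sum_of_nonempty (Finset.nonempty_Ico.2 hlt)
              (f := fun i => rhok k (v i) - (1+((k:ℝ)+2)/(((k:ℝ)+2)^2-1)))
              (g := fun _ => (0:ℝ))
              (fun i hi => by
                have h34 := rhok_le_34 k (hc3 i (Finset.mem_Ico.1 hi).2)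
                  (h5lo i (Finset.mem_Ico.1 hi).1)
                linarith)
            simpa using h
          have hP0 : ∑ i ∈ Finset.Ico 0 c6, (rhok k (v i) - (1+((k:ℝ)+2)/(((k:ℝ)+2)^2-1))) = 0 := by
            rw [hc60]
            simp
          linarith
        funext i
        show v i = (List.replicate (k+1) 5 ++ [2,1]).getD i 0
        by_cases h1 : i < k+1
        · rw [List.getD_append _ _ _ _ (by simp only [List.length_replicate]; omega),
            getD_repl 5 h1]
          exact le_antisymm (h6lo i (by omega)) (h5hi i (by omega))
        · by_cases h2 : i < k+2
          · have hieq : i = k+1 := by omega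
            subst hieq
            rw [List.getD_append_right _ _ _ _ (by simp only [List.length_replicate]; omega)]
            simp only [List.length_replicate, Nat.sub_self]
            show v (k+1) = 2
            exact le_antisymm (hcge _ (by omega)) (hcb2 _ (by omega))
          · by_cases h3 : i < k+3
            · have hieq : i = k+2 := by omega
              subst hieq
              rw [List.getD_append_right _ _ _ _ (by simp only [List.length_replicate]; omega)]
              simp only [List.length_replicate, show k+2-(k+1) = 1 from by omega]
              show v (k+2) = 1
              exact le_antisymm (hcb1 _ (by omega)) (hlow _ (by omega))
            · rw [List.getD_eq_default _ _ (by
                simp only [List.length_append, List.length_replicate, List.length_cons,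
                  List.length_nil]
                omega)]
              exact hzero i (by omega)
      · exfalso
        have hc61 : 0 < c6 := by omega
        have hPpos : 0 < ∑ i ∈ Finset.Ico 0 c6, (rhok k (v i) - (1+((k:ℝ)+2)/(((k:ℝ)+2)^2-1))) := by
          have h := Finset.sum_lt_sum_of_nonempty (Finset.nonempty_Ico.2 hc61)
            (f := fun _ => (0:ℝ))
            (fun i hi => sub_pos.2 (rhok_ge_six_lb k (h6hi i (Finset.mem_Ico.1 hi).2)))
          simpa using h
        have hc5c : c5 < c := by
          rcases Nat.lt_or_ge c5 c with h | h
          · exact h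
          · exfalso
            have hceq : c5 = c := by omega
            rw [hceq] at hsplitT hMid
            simp only [Finset.Ico_self, Finset.sum_empty] at hsplitT
            linarith
        have hDub : ∑ i ∈ Finset.Ico c5 c, (rhok k (v i) - (1+((k:ℝ)+2)/(((k:ℝ)+2)^2-1))) ≤ -(1/((((k:ℝ)+2)^2-1)*(((k:ℝ)+2)^2+((k:ℝ)+2)-1))) := by
          calc ∑ i ∈ Finset.Ico c5 c, (rhok k (v i) - (1+((k:ℝ)+2)/(((k:ℝ)+2)^2-1)))
              ≤ ∑ _i ∈ Finset.Ico c5 c, (-(1/((((k:ℝ)+2)^2-1)*(((k:ℝ)+2)^2+((k:ℝ)+2)-1)))) := Finset.sum_le_sum (fun i hi => by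
                have h34 := rhok_le_34 k (hc3 i (Finset.mem_Ico.1 hi).2)
                  (h5lo i (Finset.mem_Ico.1 hi).1)
                linarith)
          _ = ((c - c5:ℕ):ℝ) * (-(1/((((k:ℝ)+2)^2-1)*(((k:ℝ)+2)^2+((k:ℝ)+2)-1)))) := by
              rw [Finset.sum_const, Nat.card_Ico, nsmul_eq_mul]
          _ ≤ -(1/((((k:ℝ)+2)^2-1)*(((k:ℝ)+2)^2+((k:ℝ)+2)-1))) := by
              have h1 : (1:ℝ) ≤ ((c - c5:ℕ):ℝ) := by exact_mod_cast (by omega : 1 ≤ c - c5)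
              have h2 := mul_le_mul_of_nonneg_right h1
                (le_of_lt hbpos)
              rw [one_mul] at h2
              linarith
        have hPub : ∑ i ∈ Finset.Ico 0 c6, (rhok k (v i) - (1+((k:ℝ)+2)/(((k:ℝ)+2)^2-1)))
            ≤ (c6:ℝ) * (((k:ℝ)+2)^3/(((((k:ℝ)+2)^2-2)^3)*(((k:ℝ)+2)^2-1))) := by
          calc ∑ i ∈ Finset.Ico 0 c6, (rhok k (v i) - (1+((k:ℝ)+2)/(((k:ℝ)+2)^2-1)))
              ≤ ∑ _i ∈ Finset.Ico 0 c6, (((k:ℝ)+2)^3/(((((k:ℝ)+2)^2-2)^3)*(((k:ℝ)+2)^2-1))) := Finset.sum_le_sum (fun i hi => by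
                have h6 := rhok_ge_six_ub k (h6hi i (Finset.mem_Ico.1 hi).2)
                linarith)
          _ = (c6:ℝ) * (((k:ℝ)+2)^3/(((((k:ℝ)+2)^2-2)^3)*(((k:ℝ)+2)^2-1))) := by
              rw [Finset.sum_const, Nat.card_Ico, Nat.sub_zero, nsmul_eq_mul]
        have hc6k : c6 ≤ k := by omega
        have hcore : (k:ℝ)*(((k:ℝ)+2)^3*(((k:ℝ)+2)^2+((k:ℝ)+2)-1)) < (((k:ℝ)+2)^2-2)^3 := by
          nlinarith [pow_nonneg hk0 5, pow_nonneg hk0 4, pow_nonneg hk0 3, sq_nonneg ((k:ℝ)), hk0]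
        have hKpos : (0:ℝ) < ((k:ℝ)+2)^3/(((((k:ℝ)+2)^2-2)^3)*(((k:ℝ)+2)^2-1)) :=
          div_pos (by positivity) (mul_pos (pow_pos hq2 3) e2)
        have hfin : (k:ℝ)*(((k:ℝ)+2)^3/(((((k:ℝ)+2)^2-2)^3)*(((k:ℝ)+2)^2-1))) < 1/((((k:ℝ)+2)^2-1)*(((k:ℝ)+2)^2+((k:ℝ)+2)-1)) := by
          have h1 : (k:ℝ)*(((k:ℝ)+2)^3/(((((k:ℝ)+2)^2-2)^3)*(((k:ℝ)+2)^2-1))) = ((k:ℝ)*((k:ℝ)+2)^3)/((((k:ℝ)+2)^2-2)^3*(((k:ℝ)+2)^2-1)) := by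
            ring
          rw [h1, div_lt_div_iff₀ (mul_pos (pow_pos hq2 3) e2) (mul_pos e2 e3)]
          nlinarith [mul_lt_mul_of_pos_right hcore e2]
        have hc6K : (c6:ℝ) * (((k:ℝ)+2)^3/(((((k:ℝ)+2)^2-2)^3)*(((k:ℝ)+2)^2-1))) ≤ (k:ℝ) * (((k:ℝ)+2)^3/(((((k:ℝ)+2)^2-2)^3)*(((k:ℝ)+2)^2-1))) := by
          have hc6R : (c6:ℝ) ≤ (k:ℝ) := by exact_mod_cast hc6k
          exact mul_le_mul_of_nonneg_right hc6R (le_of_lt hKpos)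
        linarith


end Aux

/-- For every integer `k ≥ 0`, the set of solutions `v ∈ Ṽ` of
`ρ_k(v) = k + 4` is exactly `{(1^{k+4}), (2^{k+3}), (3^{k+2},1), (5^{k+1},2,1)}`. -/
theorem rhok_eq_solutions (k : ℕ) (v : ℕ → ℕ) (hv : IsVt v) :
    rhokV k v = (k : ℝ) + 4 ↔
      v = ofList (List.replicate (k + 4) 1) ∨
      v = ofList (List.replicate (k + 3) 2) ∨
      v = ofList (List.replicate (k + 2) 3 ++ [1]) ∨
      v = ofList (List.replicate (k + 1) 5 ++ [2, 1]) := by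
  obtain ⟨mono, s, hs⟩ := hv
  constructor
  · exact Aux.forward k v mono s hs
  · rintro (rfl | rfl | rfl | rfl)
    · exact Aux.comp1 k
    · exact Aux.comp2 k
    · exact Aux.comp3 k
    · exact Aux.comp4 k
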